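/- arXiv:1210.3855 — 5 statements merged into one kernel-verified Lean document; each statement's English description precedes it below -/
import Mathlib

section
/- Let R be a Noetherian ring and let 0 → N → M → Q → 0 be a short exact sequence of finitely generated R-modules (i.e., there are R-linear maps i : N → M and p : M → Q with i injective, p surjective, and range i = ker p). Then len_R Q + len_R N ≤ len_R M ≤ len_R Q ♯ len_R N, where + denotes ordinal addition and ♯ the natural (Hessenberg) sum of ordinals. -/
namespace Ordinal

/-- Natural (Hessenberg) addition of ordinals, as formerly defined in Mathlib. -/
noncomputable def nadd (a b : Ordinal) : Ordinal :=
  max (⨆ x : Set.Iio a, Order.succ (nadd x.1 b)) (⨆ x : Set.Iio b, Order.succ (nadd a x.1))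
termination_by (a, b)
decreasing_by all_goals cases x; decreasing_tactic

end Ordinal

namespace NaturalOps

infixl:65 " ♯ " => Ordinal.nadd

end NaturalOps

open Ordinal NaturalOps

/-- The ordinal length of a Noetherian module: the rank of the zero submodule in the
well-founded order of submodules under reverse inclusion, i.e.
`rank N = sup { rank N' + 1 : N ⊊ N' }` and `len M = rank ⊥`. -/
noncomputable def moduleLength (R M : Type*) [Ring R] [AddCommGroup M] [Module R M]
    [IsNoetherian R M] : Ordinal :=
  IsWellFounded.rank (α := Submodule R M) (· > ·) ⊥

universe w0

lemma nadd_lt_nadd_right {a' a : Ordinal.{w0}} (h : a' < a) (b : Ordinal.{w0}) : (a' ♯ b : Ordinal.{w0}) < a ♯ b := by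
  rw [Ordinal.nadd.eq_1 a b]
  refine lt_of_lt_of_le (Order.lt_succ _) (le_max_of_le_left ?_)
  exact le_ciSup (f := fun x : Set.Iio a => Order.succ (nadd x.1 b : Ordinal.{w0}))
    Ordinal.bddAbove_of_small (⟨a', h⟩ : Set.Iio a)

lemma nadd_lt_nadd_left {b' b : Ordinal.{w0}} (h : b' < b) (a : Ordinal.{w0}) : (a ♯ b' : Ordinal.{w0}) < a ♯ b := by
  rw [Ordinal.nadd.eq_1 a b]
  refine lt_of_lt_of_le (Order.lt_succ _) (le_max_of_le_right ?_)
  exact le_ciSup (f := fun x : Set.Iio b => Order.succ (nadd a x.1 : Ordinal.{w0}))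
    Ordinal.bddAbove_of_small (⟨b', h⟩ : Set.Iio b)

lemma nadd_le_nadd_right {a' a : Ordinal.{w0}} (h : a' ≤ a) (b : Ordinal.{w0}) : (a' ♯ b : Ordinal.{w0}) ≤ a ♯ b := by
  rcases h.lt_or_eq with h | rfl
  · exact (nadd_lt_nadd_right h b).le
  · rfl

lemma nadd_le_nadd_left {b' b : Ordinal.{w0}} (h : b' ≤ b) (a : Ordinal.{w0}) : (a ♯ b' : Ordinal.{w0}) ≤ a ♯ b := by
  rcases h.lt_or_eq with h | rfl
  · exact (nadd_lt_nadd_left h a).le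
  · rfl

section RankLemmas

universe w

variable {α β : Type w}

/-- Rank is monotone along relation-preserving maps. -/
lemma rank_le_rank_of_relHom {r : α → α → Prop} {s : β → β → Prop}
    [IsWellFounded α r] [IsWellFounded β s] (f : α → β)
    (hf : ∀ {a b : α}, r a b → s (f a) (f b)) (a : α) :
    IsWellFounded.rank r a ≤ IsWellFounded.rank s (f a) := by
  refine IsWellFounded.induction r
    (motive := fun a => IsWellFounded.rank r a ≤ IsWellFounded.rank s (f a)) a fun a IH => ?_
  show IsWellFounded.rank r a ≤ _
  rw [IsWellFounded.rank_eq]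
  refine Ordinal.iSup_le fun b => ?_
  rw [Order.succ_le_iff]
  exact (IH b b.2).trans_lt (IsWellFounded.rank_lt_of_rel (hf b.2))

lemma rank_gt_antitone [PartialOrder α] [WellFoundedGT α] :
    Antitone (IsWellFounded.rank (α := α) (· > ·)) := fun a b h => by
  rcases h.lt_or_eq with h | rfl
  · exact (WellFoundedGT.rank_strictAnti h).le
  · rfl

/-- In a product of well-founded posets, rank is at most the natural sum of the ranks. -/
lemma rank_prod_le_nadd [PartialOrder α] [PartialOrder β] [WellFoundedGT α] [WellFoundedGT β]
    (x : α × β) :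
    IsWellFounded.rank (α := α × β) (· > ·) x ≤
      IsWellFounded.rank (α := α) (· > ·) x.1 ♯ IsWellFounded.rank (α := β) (· > ·) x.2 := by
  refine IsWellFounded.induction (α := α × β) (· > ·)
    (motive := fun x => IsWellFounded.rank (α := α × β) (· > ·) x ≤
      IsWellFounded.rank (α := α) (· > ·) x.1 ♯ IsWellFounded.rank (α := β) (· > ·) x.2)
    x fun x IH => ?_
  show IsWellFounded.rank _ x ≤ _
  rw [IsWellFounded.rank_eq]
  refine Ordinal.iSup_le fun ⟨y, hy⟩ => ?_
  rw [Order.succ_le_iff]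
  refine (IH y hy).trans_lt ?_
  rcases Prod.lt_iff.mp hy with ⟨h1, h2⟩ | ⟨h1, h2⟩
  · exact lt_of_lt_of_le (nadd_lt_nadd_right (WellFoundedGT.rank_strictAnti h1) _)
      (nadd_le_nadd_left (rank_gt_antitone h2) _)
  · exact lt_of_le_of_lt (nadd_le_nadd_right (rank_gt_antitone h1) _)
      (nadd_lt_nadd_left (WellFoundedGT.rank_strictAnti h2) _)

/-- Lower bound : `rank a + rank_{[⊥,a]} b ≤ rank b` for `b ≤ a`. -/
lemma rank_add_rank_Iic_le [PartialOrder α] [WellFoundedGT α] (a : α) (b : Set.Iic a) :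
    IsWellFounded.rank (α := α) (· > ·) a + IsWellFounded.rank (α := Set.Iic a) (· > ·) b ≤
      IsWellFounded.rank (α := α) (· > ·) (b : α) := by
  refine IsWellFounded.induction (α := Set.Iic a) (· > ·)
    (motive := fun b => IsWellFounded.rank (α := α) (· > ·) a +
        IsWellFounded.rank (α := Set.Iic a) (· > ·) b ≤
      IsWellFounded.rank (α := α) (· > ·) (b : α))
    b fun b IH => ?_
  show IsWellFounded.rank (α := α) (· > ·) a +
        IsWellFounded.rank (α := Set.Iic a) (· > ·) b ≤ _
  rcases isEmpty_or_nonempty { b' : Set.Iic a // b' > b } with he | hne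
  · rw [IsWellFounded.rank_eq ((· > ·) : Set.Iic a → Set.Iic a → Prop) b, ciSup_of_empty, Ordinal.bot_eq_zero, add_zero]
    exact rank_gt_antitone b.2
  · rw [IsWellFounded.rank_eq ((· > ·) : Set.Iic a → Set.Iic a → Prop) b, (isNormal_add_right _).map_iSup]
    refine Ordinal.iSup_le fun ⟨b', hb'⟩ => ?_
    rw [Ordinal.add_succ, Order.succ_le_iff]
    exact (IH b' hb').trans_lt (WellFoundedGT.rank_strictAnti (Subtype.coe_lt_coe.mpr hb'))
    exact Ordinal.bddAbove_of_small

end RankLemmas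

universe u v

/-- Semi-additivity: for a short exact sequence `0 → N → M → Q → 0` of finitely generated
modules over a Noetherian ring, `len Q + len N ≤ len M ≤ len Q ♯ len N`. -/
theorem moduleLength_semi_additivity
    (R : Type u) [CommRing R] [IsNoetherianRing R]
    (N M Q : Type v) [AddCommGroup N] [AddCommGroup M] [AddCommGroup Q]
    [Module R N] [Module R M] [Module R Q]
    [Module.Finite R N] [Module.Finite R M] [Module.Finite R Q]
    (i : N →ₗ[R] M) (p : M →ₗ[R] Q)
    (hi : Function.Injective i) (hp : Function.Surjective p)
    (hexact : LinearMap.range i = LinearMap.ker p) :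
    moduleLength R Q + moduleLength R N ≤ moduleLength R M ∧
      moduleLength R M ≤ moduleLength R Q ♯ moduleLength R N := by
  set K : Submodule R M := LinearMap.ker p with hK
  constructor
  · -- lower bound
    have hQ : moduleLength R Q ≤ IsWellFounded.rank (α := Submodule R M) (· > ·) K := by
      have hg : StrictMono (Submodule.comap p) :=
        Monotone.strictMono_of_injective (fun _ _ => Submodule.comap_mono)
          (Submodule.comap_injective_of_surjective hp)
      have := rank_le_rank_of_relHom (r := (· > ·)) (s := (· > ·))
        (Submodule.comap p) (fun {a b} (h : b < a) => hg h) (⊥ : Submodule R Q)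
      rwa [Submodule.comap_bot] at this
    have hN : moduleLength R N ≤
        IsWellFounded.rank (α := Set.Iic K) (· > ·) ⟨⊥, Set.mem_Iic.mpr bot_le⟩ := by
      have hmap : ∀ S : Submodule R N, S.map i ≤ K := fun S => by
        rw [← hexact]
        exact (Submodule.map_mono le_top).trans_eq (Submodule.map_top i ▸ rfl)
      set h : Submodule R N → Set.Iic K := fun S => ⟨S.map i, hmap S⟩ with hh
      have hsm : StrictMono h := by
        refine Monotone.strictMono_of_injective (fun S T hST => ?_) ?_
        · exact Subtype.mk_le_mk.mpr (Submodule.map_mono hST)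
        · intro S T hST
          exact Submodule.map_injective_of_injective hi (congrArg Subtype.val hST)
      have := rank_le_rank_of_relHom (r := (· > ·)) (s := (· > ·))
        h (fun {a b} (hab : b < a) => hsm hab) (⊥ : Submodule R N)
      refine this.trans (le_of_eq (congrArg _ ?_))
      simp [hh, Submodule.map_bot]
    calc moduleLength R Q + moduleLength R N
        ≤ IsWellFounded.rank (α := Submodule R M) (· > ·) K +
          IsWellFounded.rank (α := Set.Iic K) (· > ·) ⟨⊥, Set.mem_Iic.mpr bot_le⟩ := add_le_add hQ hN
      _ ≤ IsWellFounded.rank (α := Submodule R M) (· > ·)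
            ((⟨⊥, Set.mem_Iic.mpr bot_le⟩ : Set.Iic K) : Submodule R M) := rank_add_rank_Iic_le K _
      _ = moduleLength R M := rfl
  · -- upper bound
    set f : Submodule R M → Submodule R Q × Submodule R N :=
      fun X => (X.map p, X.comap i) with hf
    have hinj : ∀ X Y : Submodule R M, X ≤ Y → f X = f Y → X = Y := by
      intro X Y hXY hfXY
      have h1 : X.map p = Y.map p := congrArg Prod.fst hfXY
      have h2 : X.comap i = Y.comap i := congrArg Prod.snd hfXY
      refine le_antisymm hXY fun y hy => ?_
      have : p y ∈ X.map p := h1 ▸ Submodule.mem_map_of_mem hy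
      obtain ⟨x, hx, hpx⟩ := this
      have hker : y - x ∈ K := by
        simp [hK, LinearMap.mem_ker, map_sub, hpx]
      rw [← hexact] at hker
      obtain ⟨n, hn⟩ := hker
      have hnY : n ∈ Y.comap i := by
        simp only [Submodule.mem_comap, hn]
        exact Y.sub_mem hy (hXY hx)
      rw [← h2] at hnY
      have : x + i n ∈ X := X.add_mem hx hnY
      rw [hn] at this
      simpa using this
    have hsm : StrictMono f := fun X Y hXY =>
      lt_of_le_of_ne ⟨Submodule.map_mono hXY.le, Submodule.comap_mono hXY.le⟩
        (fun h => hXY.ne (hinj X Y hXY.le h))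
    have h1 := rank_le_rank_of_relHom (r := (· > ·)) (s := (· > ·)) f
      (fun {a b} (h : b < a) => hsm h) (⊥ : Submodule R M)
    have hf0 : f ⊥ = (⊥, ⊥) := by
      simp [hf, Submodule.map_bot, Submodule.comap_bot, LinearMap.ker_eq_bot.mpr hi]
    rw [hf0] at h1
    exact h1.trans (rank_prod_le_nadd ((⊥, ⊥) : Submodule R Q × Submodule R N))
end

section
/- Let R be a Noetherian ring, M a finitely generated R-module, and N a submodule of M whose ordinal length len_R N is finite (i.e., len_R N < ω). Then len_R M = len_R (M/N) + len_R N, where + is ordinal addition. -/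
open Ordinal

universe u v

section GeneralRank

variable {α : Type v} [Preorder α] [WellFoundedGT α]

private lemma rank_le_of_strictMono {β : Type v} [Preorder β] [WellFoundedGT β]
    (f : α → β) (hf : StrictMono f) (a : α) :
    IsWellFounded.rank (α := α) (· > ·) a ≤ IsWellFounded.rank (α := β) (· > ·) (f a) := by
  induction a using IsWellFounded.induction (α := α) (· > ·) with
  | _ a IH =>
    rw [IsWellFounded.rank_eq]
    apply Ordinal.iSup_le
    rintro ⟨b, hb⟩
    rw [Order.succ_le_iff]
    exact lt_of_le_of_lt (IH b hb) (IsWellFounded.rank_lt_of_rel (hf hb))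

private lemma rank_orderIso {β : Type v} [Preorder β] [WellFoundedGT β]
    (e : α ≃o β) (a : α) :
    IsWellFounded.rank (α := β) (· > ·) (e a) = IsWellFounded.rank (α := α) (· > ·) a := by
  apply le_antisymm
  · simpa using rank_le_of_strictMono (e.symm : β → α) e.symm.strictMono (e a)
  · exact rank_le_of_strictMono e e.strictMono a

private lemma subtype_wfgt (p : α → Prop) : WellFoundedGT {x // p x} :=
  ⟨(Subtype.relEmbedding (· > ·) p).wellFounded IsWellFounded.wf⟩

private lemma rank_subtype_upclosed (p : α → Prop) (hp : ∀ ⦃a b⦄, p a → a ≤ b → p b)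
    (a : α) (ha : p a) :
    haveI := subtype_wfgt p
    IsWellFounded.rank (α := {x // p x}) (· > ·) ⟨a, ha⟩
      = IsWellFounded.rank (α := α) (· > ·) a := by
  haveI := subtype_wfgt p
  have key : ∀ a : α, ∀ ha : p a,
      IsWellFounded.rank (α := α) (· > ·) a
        ≤ IsWellFounded.rank (α := {x // p x}) (· > ·) ⟨a, ha⟩ := by
    intro a
    induction a using IsWellFounded.induction (α := α) (· > ·) with
    | _ a IH =>
      intro ha
      rw [IsWellFounded.rank_eq (α := α)]
      apply Ordinal.iSup_le
      rintro ⟨b, hb⟩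
      rw [Order.succ_le_iff]
      have hpb : p b := hp ha hb.le
      exact lt_of_le_of_lt (IH b hb hpb)
        (IsWellFounded.rank_lt_of_rel (α := {x // p x}) (a := ⟨b, hpb⟩) (by exact hb))
  exact le_antisymm (rank_le_of_strictMono Subtype.val (fun x y h => h) ⟨a, ha⟩) (key a ha)

private lemma rank_le_of_le {γ : Type v} [PartialOrder γ] [WellFoundedGT γ] {a b : γ} (h : a ≤ b) :
    IsWellFounded.rank (α := γ) (· > ·) b ≤ IsWellFounded.rank (α := γ) (· > ·) a := by
  rcases eq_or_lt_of_le h with rfl | h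
  · rfl
  · exact (IsWellFounded.rank_lt_of_rel (α := γ) (r := (· > ·)) h).le

end GeneralRank

section ModuleLemmas

variable {R : Type u} [Ring R] {M : Type v} [AddCommGroup M] [Module R M] [IsNoetherian R M]

/-- The rank of a submodule `N` inside the lattice of submodules of `M` equals the
length of `M ⧸ N`. -/
private lemma rank_eq_moduleLength_quotient (N : Submodule R M) :
    IsWellFounded.rank (α := Submodule R M) (· > ·) N = moduleLength R (M ⧸ N) := by
  haveI := subtype_wfgt (α := Submodule R M) (fun p => N ≤ p)
  have h0 : (Submodule.comapMkQRelIso N) (⊥ : Submodule R (M ⧸ N)) = ⟨N, Set.mem_Ici.mpr le_rfl⟩ :=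
    Subtype.ext ((Submodule.comap_bot N.mkQ).trans (Submodule.ker_mkQ N))
  have h1 := rank_orderIso (Submodule.comapMkQRelIso N) (⊥ : Submodule R (M ⧸ N))
  rw [h0] at h1
  rw [moduleLength, ← h1]
  exact (rank_subtype_upclosed (fun p => N ≤ p)
    (fun a b ha hab => ha.trans hab) N le_rfl).symm

private lemma moduleLength_congr {M₂ : Type v} [AddCommGroup M₂] [Module R M₂]
    [IsNoetherian R M₂] (e : M ≃ₗ[R] M₂) : moduleLength R M = moduleLength R M₂ := by
  have := rank_orderIso (Submodule.orderIsoMapComap e) (⊥ : Submodule R M)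
  rw [moduleLength, moduleLength, ← this]
  congr 1
  simp [Submodule.orderIsoMapComap, Submodule.orderIsoMapComapOfBijective]

/-- Key lemma: for an atom `S` and any submodule `c` not containing `S`,
`rank c = rank (c ⊔ S) + 1`. -/
private lemma rank_sup_atom {S : Submodule R M} (hS : IsAtom S) (c : Submodule R M)
    (h : ¬ S ≤ c) :
    IsWellFounded.rank (α := Submodule R M) (· > ·) c
      = IsWellFounded.rank (α := Submodule R M) (· > ·) (c ⊔ S) + 1 := by
  have key : ∀ c : Submodule R M,
      IsWellFounded.rank (α := Submodule R M) (· > ·) c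
        ≤ IsWellFounded.rank (α := Submodule R M) (· > ·) (c ⊔ S) + 1 := by
    intro c
    induction c using IsWellFounded.induction (α := Submodule R M) (· > ·) with
    | _ c IH =>
      rw [IsWellFounded.rank_eq]
      apply Ordinal.iSup_le
      rintro ⟨d, hd⟩
      rw [Ordinal.add_one_eq_succ, Order.succ_le_succ_iff]
      by_cases hSd : S ≤ d
      · exact rank_le_of_le (sup_le hd.le hSd)
      · have hdS : c ⊔ S < d ⊔ S := by
          refine lt_of_le_of_ne (sup_le_sup_right hd.le S) (fun heq => ?_)
          have hSd' : S ⊓ d = ⊥ := by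
            refine hS.2 _ (lt_of_le_of_ne inf_le_left (fun h' => hSd ?_))
            rw [← h']; exact inf_le_right
          have : d = c := by
            have hcd : c ≤ d := hd.le
            have h1 : d ≤ c ⊔ S := heq ▸ le_sup_left
            have h2 : (c ⊔ S) ⊓ d = c ⊔ S ⊓ d := sup_inf_assoc_of_le S hcd
            rw [hSd', sup_bot_eq, inf_eq_right.mpr h1] at h2
            exact h2
          exact (lt_irrefl c (this ▸ hd))
        calc IsWellFounded.rank (α := Submodule R M) (· > ·) d
            ≤ IsWellFounded.rank (α := Submodule R M) (· > ·) (d ⊔ S) + 1 := IH d hd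
          _ ≤ IsWellFounded.rank (α := Submodule R M) (· > ·) (c ⊔ S) := by
              rw [Ordinal.add_one_eq_succ, Order.succ_le_iff]
              exact IsWellFounded.rank_lt_of_rel (α := Submodule R M) (r := (· > ·)) hdS
  apply le_antisymm (key c)
  rw [Ordinal.add_one_eq_succ, Order.succ_le_iff]
  exact IsWellFounded.rank_lt_of_rel (α := Submodule R M) (r := (· > ·))
    (lt_of_le_of_ne le_sup_left (fun heq => h (heq ▸ le_sup_right)))

/-- A nonzero Noetherian module of finite length has a simple submodule. -/
private lemma exists_atom_of_finite_length (h0 : 0 < moduleLength R M)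
    (hω : moduleLength R M < ω) : ∃ S : Submodule R M, IsAtom S := by
  obtain ⟨n, hn⟩ := Ordinal.lt_omega0.mp hω
  -- every nonzero submodule has rank < ω
  have hrank : ∀ c : Submodule R M, c ≠ ⊥ →
      IsWellFounded.rank (α := Submodule R M) (· > ·) c < (n : Ordinal) := by
    intro c hc
    rw [← hn]
    exact IsWellFounded.rank_lt_of_rel (α := Submodule R M) (r := (· > ·))
      (bot_lt_iff_ne_bot.mpr hc)
  set T : Set ℕ := {k | ∃ c : Submodule R M, c ≠ ⊥ ∧
    IsWellFounded.rank (α := Submodule R M) (· > ·) c = (k : Ordinal)} with hT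
  have hne : ∃ c : Submodule R M, c ≠ ⊥ := by
    by_contra hall
    push_neg at hall
    haveI hemp : IsEmpty {b : Submodule R M // b > ⊥} :=
      ⟨fun ⟨b, hb⟩ => hb.ne' (hall b)⟩
    rw [moduleLength, IsWellFounded.rank_eq] at h0
    simp [ciSup_of_empty] at h0
  obtain ⟨c₀, hc₀⟩ := hne
  have hTne : T.Nonempty := by
    obtain ⟨k, hk⟩ := Ordinal.lt_omega0.mp ((hrank c₀ hc₀).trans (Ordinal.natCast_lt_omega0 n))
    exact ⟨k, c₀, hc₀, hk⟩
  have hTbdd : ∀ k ∈ T, k ≤ n := by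
    rintro k ⟨c, hc, hck⟩
    have := hrank c hc
    rw [hck, Nat.cast_lt] at this
    exact this.le
  obtain ⟨c, hc, hck⟩ := Nat.sSup_mem hTne ⟨n, fun k hk => hTbdd k hk⟩
  refine ⟨c, hc, fun b hb => ?_⟩
  by_contra hbne
  have hblt := IsWellFounded.rank_lt_of_rel (α := Submodule R M) (r := (· > ·)) hb
  rw [hck] at hblt
  obtain ⟨k, hk⟩ := Ordinal.lt_omega0.mp ((hrank b hbne).trans (Ordinal.natCast_lt_omega0 n))
  have hkT : k ∈ T := ⟨b, hbne, hk⟩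
  have : ((sSup T : ℕ) : Ordinal) < (k : Ordinal) := hk ▸ hblt
  rw [Nat.cast_lt] at this
  exact absurd (le_csSup ⟨n, fun x hx => hTbdd x hx⟩ hkT) (not_le.mpr this)

private lemma isAtom_map_subtype {N : Submodule R M} {S' : Submodule R ↥N} (h : IsAtom S') :
    IsAtom (S'.map N.subtype) := by
  constructor
  · intro hbot
    apply h.1
    have := congrArg (Submodule.comap N.subtype) hbot
    rwa [Submodule.comap_map_eq_of_injective N.injective_subtype, Submodule.comap_bot,
      Submodule.ker_subtype] at this
  · intro b hb
    have hbN : b ≤ N := hb.le.trans (Submodule.map_subtype_le N S')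
    have hb2 : Submodule.map N.subtype (Submodule.comap N.subtype b) = b := by
      rw [Submodule.map_comap_subtype, inf_eq_right.mpr hbN]
    have hlt : Submodule.comap N.subtype b < S' := by
      refine lt_of_le_of_ne ?_ (fun heq => hb.ne ?_)
      · have := Submodule.comap_mono (f := N.subtype) hb.le
        rwa [Submodule.comap_map_eq_of_injective N.injective_subtype] at this
      · rw [← hb2, heq]
    rw [← hb2, h.2 _ hlt, Submodule.map_bot]

end ModuleLemmas

private lemma main_induction (R : Type u) [CommRing R] [IsNoetherianRing R] (n : ℕ) :
    ∀ (M : Type v) [AddCommGroup M] [Module R M] [Module.Finite R M]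
      (N : Submodule R M), moduleLength R N = n →
      moduleLength R M = moduleLength R (M ⧸ N) + n := by
  induction n with
  | zero =>
    intro M _ _ _ N h
    have hNbot : N = ⊥ := by
      by_contra hne
      haveI : Nontrivial ↥N := Submodule.nontrivial_iff_ne_bot.mpr hne
      have hlt : (⊤ : Submodule R ↥N) > ⊥ := bot_lt_top
      have h2 := IsWellFounded.rank_lt_of_rel (α := Submodule R ↥N) (r := (· > ·)) hlt
      have h3 : IsWellFounded.rank (α := Submodule R ↥N) (· > ·) ⊥ = moduleLength R ↥N := rfl
      rw [h3, h, Nat.cast_zero] at h2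
      exact not_lt_zero h2
    subst hNbot
    rw [Nat.cast_zero, add_zero]
    exact moduleLength_congr (Submodule.quotEquivOfEqBot ⊥ rfl).symm
  | succ n IH =>
    intro M _ _ _ N h
    have h0 : 0 < moduleLength R ↥N := by
      rw [h]; exact_mod_cast Nat.cast_pos.mpr (Nat.succ_pos n)
    have hω : moduleLength R ↥N < ω := by
      rw [h]; exact Ordinal.natCast_lt_omega0 _
    obtain ⟨S', hS'⟩ := exists_atom_of_finite_length h0 hω
    set S : Submodule R M := S'.map N.subtype with hSdef
    have hS : IsAtom S := isAtom_map_subtype hS'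
    have hSN : S ≤ N := Submodule.map_subtype_le N S'
    -- length of N ⧸ S' is n
    have hq1 : moduleLength R ↥N = moduleLength R (↥N ⧸ S') + 1 := by
      have h2 := rank_sup_atom hS' ⊥ (by simpa using hS'.1)
      rw [bot_sup_eq, rank_eq_moduleLength_quotient S'] at h2
      exact h2
    have hq : moduleLength R (↥N ⧸ S') = n := by
      rw [hq1, Nat.cast_succ] at h
      rwa [Ordinal.add_one_eq_succ, Ordinal.add_one_eq_succ, Order.succ_eq_succ_iff] at h
    -- identify N ⧸ S' with the image of N in M ⧸ S
    have hker : LinearMap.ker (S.mkQ ∘ₗ N.subtype) = S' := by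
      rw [LinearMap.ker_comp, Submodule.ker_mkQ, hSdef,
        Submodule.comap_map_eq_of_injective N.injective_subtype]
    have hran : LinearMap.range (S.mkQ ∘ₗ N.subtype) = N.map S.mkQ := by
      rw [LinearMap.range_comp, Submodule.range_subtype]
    have e1 : (↥N ⧸ S') ≃ₗ[R] ↥(N.map S.mkQ) :=
      (Submodule.quotEquivOfEq _ _ hker.symm).trans
        ((LinearMap.quotKerEquivRange (S.mkQ ∘ₗ N.subtype)).trans (LinearEquiv.ofEq _ _ hran))
    have hIH := IH (M ⧸ S) (N.map S.mkQ) ((moduleLength_congr e1).symm.trans hq)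
    have h3 : moduleLength R M = moduleLength R (M ⧸ S) + 1 := by
      have h4 := rank_sup_atom hS ⊥ (by simpa using hS.1)
      rw [bot_sup_eq, rank_eq_moduleLength_quotient S] at h4
      exact h4
    have e2 := Submodule.quotientQuotientEquivQuotient S N hSN
    calc moduleLength R M = moduleLength R (M ⧸ S) + 1 := h3
      _ = (moduleLength R ((M ⧸ S) ⧸ N.map S.mkQ) + n) + 1 := by rw [hIH]
      _ = moduleLength R (M ⧸ N) + ((n : Ordinal) + 1) := by
          rw [moduleLength_congr e2, add_assoc]
      _ = moduleLength R (M ⧸ N) + ((n + 1 : ℕ) : Ordinal) := by norm_cast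

/-- If `N ⊆ M` has finite ordinal length, then `len M = len (M/N) + len N`. -/
theorem moduleLength_eq_quotient_add
    (R : Type u) [CommRing R] [IsNoetherianRing R]
    (M : Type v) [AddCommGroup M] [Module R M] [Module.Finite R M]
    (N : Submodule R M) (hN : moduleLength R N < ω) :
    moduleLength R M = moduleLength R (M ⧸ N) + moduleLength R N := by
  obtain ⟨n, hn⟩ := Ordinal.lt_omega0.mp hN
  rw [hn]
  exact main_induction R n M N hn
end

section
/- Let R be a Noetherian ring, M and N finitely generated R-modules, and f : M → N a surjective R-linear map. If len_R M ≤ len_R N, then f is an isomorphism and len_R M = len_R N. (In particular, taking N = M, every surjective endomorphism of a finitely generated module over a Noetherian ring is an isomorphism.) -/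
open Ordinal

universe u v

lemma rank_le_of_relHom {α : Type v} {β : Type v} (r : α → α → Prop) (s : β → β → Prop)
    [IsWellFounded α r] [IsWellFounded β s] (g : α → β)
    (hg : ∀ a b, r a b → s (g a) (g b)) (a : α) :
    IsWellFounded.rank r a ≤ IsWellFounded.rank s (g a) := by
  induction a using IsWellFounded.induction r with
  | ind a ih =>
    rw [IsWellFounded.rank_eq]
    refine Ordinal.iSup_le fun ⟨b, hb⟩ => ?_
    rw [Order.succ_le_iff]
    exact lt_of_le_of_lt (ih b hb) (IsWellFounded.rank_lt_of_rel (hg b a hb))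

/-- A surjective linear map `f : M → N` of finitely generated modules over a Noetherian ring
with `len M ≤ len N` is an isomorphism, and then `len M = len N`. -/
theorem bijective_of_surjective_of_moduleLength_le
    (R : Type u) [CommRing R] [IsNoetherianRing R]
    (M N : Type v) [AddCommGroup M] [AddCommGroup N] [Module R M] [Module R N]
    [Module.Finite R M] [Module.Finite R N]
    (f : M →ₗ[R] N) (hf : Function.Surjective f)
    (hlen : moduleLength R M ≤ moduleLength R N) :
    Function.Bijective f ∧ moduleLength R M = moduleLength R N := by
  have hcomap : StrictMono (Submodule.comap f) := Submodule.comap_strictMono_of_surjective hf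
  have key : moduleLength R N ≤
      IsWellFounded.rank (α := Submodule R M) (· > ·) (LinearMap.ker f) := by
    have := rank_le_of_relHom (α := Submodule R N) (β := Submodule R M) (· > ·) (· > ·)
      (Submodule.comap f) (fun a b hab => hcomap hab) ⊥
    simpa [moduleLength, Submodule.comap_bot] using this
  have hker : LinearMap.ker f = ⊥ := by
    by_contra h
    have hgt : (LinearMap.ker f) > (⊥ : Submodule R M) := bot_lt_iff_ne_bot.2 h
    have : IsWellFounded.rank (α := Submodule R M) (· > ·) (LinearMap.ker f)
        < moduleLength R M := IsWellFounded.rank_lt_of_rel hgt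
    exact absurd (hlen.trans key) (not_le.2 this)
  refine ⟨⟨LinearMap.ker_eq_bot.1 hker, hf⟩, le_antisymm hlen ?_⟩
  calc moduleLength R N ≤ _ := key
    _ = moduleLength R M := by rw [hker]; rfl
end

section
/- Let R be a Noetherian ring and M, N finitely generated R-modules. If there exist a surjective R-linear map M → N and an injective R-linear map M → N (i.e., N is a homomorphic image of M and contains a submodule isomorphic to M), then M and N are isomorphic as R-modules. -/
universe u v

/-- If `N` is both a homomorphic image of `M` and contains a submodule isomorphic to `M`
(for `M`, `N` finitely generated over a Noetherian ring), then `M ≅ N`. -/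
theorem linearEquiv_of_surjective_of_injective
    (R : Type u) [CommRing R] [IsNoetherianRing R]
    (M N : Type v) [AddCommGroup M] [AddCommGroup N] [Module R M] [Module R N]
    [Module.Finite R M] [Module.Finite R N]
    (f : M →ₗ[R] N) (hf : Function.Surjective f)
    (g : M →ₗ[R] N) (hg : Function.Injective g) :
    Nonempty (M ≃ₗ[R] N) :=
  ⟨LinearEquiv.ofBijective f
    ⟨OrzechProperty.injective_of_surjective_of_injective g f hg hf, hf⟩⟩
end

section
/- Let R be a Noetherian ring and M, N, C finitely generated R-modules. Suppose f : M → N and g : N → C are R-linear maps with g surjective and range f = ker g (i.e., the sequence M → N → C → 0 is exact). If N is isomorphic as an R-module to the direct sum M × C, then the sequence is split exact: f is injective and there exists an R-linear map s : C → N with g ∘ s = id_C. -/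
universe u v

open JordanHolderLattice

section FLen

variable {R : Type*} [Ring R]

/-- Covers are preserved by mapping submodules of a submodule into the ambient module. -/
theorem covBy_map_subtype {M : Type*} [AddCommGroup M] [Module R M] (K : Submodule R M)
    {a b : Submodule R K} (hab : a ⋖ b) :
    (a.map K.subtype) ⋖ (b.map K.subtype) := by
  have hinj := Submodule.map_injective_of_injective (f := K.subtype) K.injective_subtype
  constructor
  · exact lt_of_le_of_ne (Submodule.map_mono hab.1.le) (fun h => hab.1.ne (hinj h))
  · intro c hc1 hc2
    have hcK : c ≤ Submodule.map K.subtype ⊤ := by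
      refine le_trans hc2.le (Submodule.map_mono le_top)
    have hc' : Submodule.map K.subtype (Submodule.comap K.subtype c) = c := by
      rw [Submodule.map_comap_subtype]
      rw [Submodule.map_top, Submodule.range_subtype] at hcK
      exact inf_eq_right.mpr hcK
    have h1 : a < Submodule.comap K.subtype c := by
      refine lt_of_le_of_ne (Submodule.map_le_iff_le_comap.mp hc1.le) (fun h => hc1.ne ?_)
      rw [h, hc']
    have h2 : Submodule.comap K.subtype c < b := by
      refine lt_of_le_of_ne ?_ (fun h => hc2.ne ?_)
      · have := Submodule.comap_mono (f := K.subtype) hc2.le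
        rwa [Submodule.comap_map_eq, Submodule.ker_subtype, sup_bot_eq] at this
      · rw [← hc', h]
    exact hab.2 h1 h2

/-- Covers are preserved by pulling back submodules of a quotient. -/
theorem covBy_comap_mkQ {M : Type*} [AddCommGroup M] [Module R M] (K : Submodule R M)
    {a b : Submodule R (M ⧸ K)} (hab : a ⋖ b) :
    (a.comap K.mkQ) ⋖ (b.comap K.mkQ) := by
  have hmap : ∀ x : Submodule R (M ⧸ K), (x.comap K.mkQ).map K.mkQ = x := by
    intro x
    rw [Submodule.map_comap_eq, Submodule.range_mkQ, top_inf_eq]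
  constructor
  · refine lt_of_le_of_ne (Submodule.comap_mono hab.1.le) (fun h => hab.1.ne ?_)
    rw [← hmap a, ← hmap b, h]
  · intro c hc1 hc2
    have hker : K ≤ c := by
      refine le_trans ?_ hc1.le
      intro x hx
      show K.mkQ x ∈ a
      have hx0 : K.mkQ x = 0 := (Submodule.Quotient.mk_eq_zero K).mpr hx
      rw [hx0]; exact a.zero_mem
    have hc' : Submodule.comap K.mkQ (Submodule.map K.mkQ c) = c := by
      rw [Submodule.comap_map_eq, Submodule.ker_mkQ, sup_eq_left.mpr hker]
    have h1 : a < Submodule.map K.mkQ c := by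
      refine lt_of_le_of_ne ?_ (fun h => hc1.ne ?_)
      · rw [← hmap a]; exact Submodule.map_mono hc1.le
      · rw [h, hc']
    have h2 : Submodule.map K.mkQ c < b := by
      refine lt_of_le_of_ne (Submodule.map_le_iff_le_comap.mpr hc2.le) (fun h => hc2.ne ?_)
      rw [← hc', h]
    exact hab.2 h1 h2

variable (R)

/-- Length of a finite-length module, via a choice of composition series. -/
noncomputable def flen (M : Type*) [AddCommGroup M] [Module R M]
    [IsNoetherian R M] [IsArtinian R M] : ℕ :=
  (exists_compositionSeries_of_isNoetherian_isArtinian R M).choose.length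

variable {R}

theorem flen_spec {M : Type*} [AddCommGroup M] [Module R M] [IsNoetherian R M] [IsArtinian R M]
    (s : CompositionSeries (Submodule R M)) (h1 : s.head = ⊥) (h2 : s.last = ⊤) :
    s.length = flen R M := by
  obtain ⟨ht1, ht2⟩ := (exists_compositionSeries_of_isNoetherian_isArtinian R M).choose_spec
  exact (CompositionSeries.jordan_holder s _ (h1.trans ht1.symm) (h2.trans ht2.symm)).length_eq

theorem flen_congr {M N : Type*} [AddCommGroup M] [Module R M] [AddCommGroup N] [Module R N]
    [IsNoetherian R M] [IsArtinian R M] [IsNoetherian R N] [IsArtinian R N] (e : M ≃ₗ[R] N) :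
    flen R M = flen R N := by
  obtain ⟨s, h1, h2⟩ := exists_compositionSeries_of_isNoetherian_isArtinian R M
  have hcov : ∀ {a b : Submodule R M}, IsMaximal a b →
      IsMaximal (Submodule.orderIsoMapComap e a) (Submodule.orderIsoMapComap e b) := by
    intro a b hab
    exact (apply_covBy_apply_iff (Submodule.orderIsoMapComap e)).mpr hab
  let t : CompositionSeries (Submodule R N) :=
    s.map ⟨fun x => Submodule.orderIsoMapComap e x, hcov⟩
  rw [← flen_spec s h1 h2, ← flen_spec t ?_ ?_]
  · rfl
  · show (Submodule.orderIsoMapComap e) s.head = ⊥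
    rw [h1]; exact map_bot _
  · show (Submodule.orderIsoMapComap e) s.last = ⊤
    rw [h2]; exact OrderIso.map_top _

theorem flen_additive {M : Type*} [AddCommGroup M] [Module R M] [IsNoetherian R M]
    [IsArtinian R M] (K : Submodule R M) :
    flen R M = flen R K + flen R (M ⧸ K) := by
  obtain ⟨s, hs1, hs2⟩ := exists_compositionSeries_of_isNoetherian_isArtinian R K
  obtain ⟨t, ht1, ht2⟩ := exists_compositionSeries_of_isNoetherian_isArtinian R (M ⧸ K)
  let s' : CompositionSeries (Submodule R M) :=
    s.map ⟨fun x => x.map K.subtype, fun h => covBy_map_subtype K h⟩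
  let t' : CompositionSeries (Submodule R M) :=
    t.map ⟨fun x => x.comap K.mkQ, fun h => covBy_comap_mkQ K h⟩
  have hconn : s'.last = t'.head := by
    show (s.last).map K.subtype = (t.head).comap K.mkQ
    rw [hs2, ht1]
    rw [Submodule.map_top, Submodule.range_subtype]
    rw [Submodule.comap_bot, Submodule.ker_mkQ]
  have := flen_spec (s'.smash t' hconn) ?_ ?_
  · rw [← this]
    have hl : (s'.smash t' hconn).length = s.length + t.length := rfl
    rw [hl, flen_spec s hs1 hs2, flen_spec t ht1 ht2]
  · show (s'.smash t' hconn).head = ⊥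
    rw [RelSeries.head_smash]
    show (s.head).map K.subtype = ⊥
    rw [hs1, Submodule.map_bot]
  · show (s'.smash t' hconn).last = ⊤
    rw [RelSeries.last_smash]
    show (t.last).comap K.mkQ = ⊤
    rw [ht2, Submodule.comap_top]

theorem flen_eq_zero_iff {M : Type*} [AddCommGroup M] [Module R M] [IsNoetherian R M]
    [IsArtinian R M] : flen R M = 0 ↔ Subsingleton M := by
  constructor
  · intro h
    obtain ⟨hs1, hs2⟩ := (exists_compositionSeries_of_isNoetherian_isArtinian R M).choose_spec
    set s₀ := (exists_compositionSeries_of_isNoetherian_isArtinian R M).choose with hs₀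
    have hlen : s₀.length = 0 := h
    have hidx : (0 : Fin (s₀.length + 1)) = Fin.last s₀.length :=
      Fin.ext (by simp [hlen])
    have : (⊥ : Submodule R M) = ⊤ := by
      rw [← hs1, ← hs2]
      show s₀ 0 = s₀ (Fin.last s₀.length)
      rw [hidx]
    refine subsingleton_of_forall_eq 0 (fun x => ?_)
    have : x ∈ (⊥ : Submodule R M) := this ▸ Submodule.mem_top
    simpa using this
  · intro h
    by_contra hne
    obtain ⟨hs1, hs2⟩ := (exists_compositionSeries_of_isNoetherian_isArtinian R M).choose_spec
    set s₀ := (exists_compositionSeries_of_isNoetherian_isArtinian R M).choose with hs₀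
    have hpos : 0 < s₀.length := Nat.pos_of_ne_zero hne
    have hlt := s₀.lt_succ ⟨0, hpos⟩
    have hall : ∀ p q : Submodule R M, p = q := by
      intro p q
      ext x
      have hx0 : x = 0 := Subsingleton.elim x 0
      simp [hx0]
    exact hlt.ne (hall _ _)

end FLen
section FLenCons

variable {R : Type*} [Ring R]

theorem flen_prod {A C : Type*} [AddCommGroup A] [Module R A] [AddCommGroup C] [Module R C]
    [IsNoetherian R A] [IsArtinian R A] [IsNoetherian R C] [IsArtinian R C] :
    flen R (A × C) = flen R A + flen R C := by
  have h1 := flen_additive (R := R) (LinearMap.ker (LinearMap.snd R A C))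
  have h2 : flen R (LinearMap.ker (LinearMap.snd R A C)) = flen R A := by
    have hEq : LinearMap.range (LinearMap.inl R A C) = LinearMap.ker (LinearMap.snd R A C) := by
      rw [LinearMap.range_inl, LinearMap.ker_snd]
    have eqv : A ≃ₗ[R] LinearMap.ker (LinearMap.snd R A C) :=
      LinearEquiv.trans (LinearEquiv.ofInjective (LinearMap.inl R A C) LinearMap.inl_injective)
        (LinearEquiv.ofEq _ _ hEq)
    exact (flen_congr eqv).symm
  have h3 : flen R ((A × C) ⧸ LinearMap.ker (LinearMap.snd R A C)) = flen R C :=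
    flen_congr ((LinearMap.snd R A C).quotKerEquivOfSurjective Prod.snd_surjective)
  rw [h1, h2, h3]

theorem eq_top_of_flen_eq {M : Type*} [AddCommGroup M] [Module R M] [IsNoetherian R M]
    [IsArtinian R M] (p : Submodule R M) (h : flen R p = flen R M) : p = ⊤ := by
  have h1 := flen_additive (R := R) p
  have h2 : flen R (M ⧸ p) = 0 := by omega
  exact Submodule.Quotient.subsingleton_iff.mp (flen_eq_zero_iff.mp h2)

theorem injective_of_surjective_flen {A B : Type*} [AddCommGroup A] [Module R A] [AddCommGroup B]
    [Module R B] [IsNoetherian R A] [IsArtinian R A] [IsNoetherian R B] [IsArtinian R B]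
    (f : A →ₗ[R] B) (hsurj : Function.Surjective f) (hlen : flen R A ≤ flen R B) :
    Function.Injective f := by
  have h1 := flen_additive (R := R) (LinearMap.ker f)
  have h2 : flen R (A ⧸ LinearMap.ker f) = flen R B :=
    flen_congr (f.quotKerEquivOfSurjective hsurj)
  have h3 : flen R (LinearMap.ker f) = 0 := by omega
  have h4 : Subsingleton (LinearMap.ker f) := flen_eq_zero_iff.mp h3
  rw [← LinearMap.ker_eq_bot]
  ext x
  simp only [Submodule.mem_bot]
  constructor
  · intro hx
    have : (⟨x, hx⟩ : LinearMap.ker f) = ⟨0, Submodule.zero_mem _⟩ := Subsingleton.elim _ _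
    exact congrArg Subtype.val this
  · rintro rfl; exact Submodule.zero_mem _

end FLenCons

section Hom

variable {R : Type*} [CommRing R]
variable {C B : Type*} [AddCommGroup C] [Module R C] [AddCommGroup B] [Module R B]

theorem hom_eval_injective {n : ℕ} {v : Fin n → C} (hv : Submodule.span R (Set.range v) = ⊤) :
    Function.Injective (LinearMap.pi (fun i : Fin n => LinearMap.applyₗ (v i)) :
      (C →ₗ[R] B) →ₗ[R] (Fin n → B)) := by
  intro s t h
  refine LinearMap.ext_on_range (v := v) (by rw [hv]) (fun i => ?_)
  exact congrFun h i

theorem hom_isNoetherian [Module.Finite R C] [IsNoetherian R B] :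
    IsNoetherian R (C →ₗ[R] B) := by
  obtain ⟨n, v, hv⟩ := Module.Finite.exists_fin (R := R) (M := C)
  exact isNoetherian_of_injective _ (hom_eval_injective (B := B) hv)

theorem hom_isArtinian [Module.Finite R C] [IsArtinian R B] :
    IsArtinian R (C →ₗ[R] B) := by
  obtain ⟨n, v, hv⟩ := Module.Finite.exists_fin (R := R) (M := C)
  exact isArtinian_of_injective _ (hom_eval_injective (B := B) hv)

end Hom

section Core

variable {R : Type u} [CommRing R]

/-- Miyata's theorem for finite-length modules. -/
theorem exists_section_of_finiteLength {A B C : Type v} [AddCommGroup A] [AddCommGroup B]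
    [AddCommGroup C] [Module R A] [Module R B] [Module R C]
    [IsNoetherian R A] [IsArtinian R A] [IsNoetherian R B] [IsArtinian R B]
    [IsNoetherian R C] [IsArtinian R C]
    (f : A →ₗ[R] B) (g : B →ₗ[R] C) (hg : Function.Surjective g)
    (hexact : LinearMap.range f = LinearMap.ker g) (e : B ≃ₗ[R] (A × C)) :
    ∃ s : C →ₗ[R] B, g ∘ₗ s = LinearMap.id := by
  haveI : Module.Finite R C := Module.finite_def.mpr (IsNoetherian.noetherian ⊤)
  set K := LinearMap.ker g with hK
  -- length bookkeeping for modules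
  have hB1 : flen R B = flen R K + flen R C := by
    have := flen_additive (R := R) K
    rwa [flen_congr (g.quotKerEquivOfSurjective hg)] at this
  have hB2 : flen R B = flen R A + flen R C := by
    rw [flen_congr e, flen_prod]
  have hKA : flen R K = flen R A := by omega
  -- the corestriction of f to K is bijective
  have hfK : ∀ a, f a ∈ K := fun a => hexact ▸ LinearMap.mem_range_self f a
  set f' : A →ₗ[R] K := f.codRestrict K hfK with hf'
  have hf'surj : Function.Surjective f' := by
    rintro ⟨k, hk⟩
    rw [← hexact] at hk
    obtain ⟨a, ha⟩ := hk
    exact ⟨a, Subtype.ext ha⟩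
  have hf'inj : Function.Injective f' :=
    injective_of_surjective_flen f' hf'surj (le_of_eq hKA.symm)
  let eK : A ≃ₗ[R] K := LinearEquiv.ofBijective f' ⟨hf'inj, hf'surj⟩
  -- Hom modules
  haveI : IsNoetherian R (C →ₗ[R] B) := hom_isNoetherian
  haveI : IsArtinian R (C →ₗ[R] B) := hom_isArtinian
  haveI : IsNoetherian R (C →ₗ[R] C) := hom_isNoetherian
  haveI : IsArtinian R (C →ₗ[R] C) := hom_isArtinian
  haveI : IsNoetherian R (C →ₗ[R] A) := hom_isNoetherian
  haveI : IsArtinian R (C →ₗ[R] A) := hom_isArtinian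
  haveI : IsNoetherian R (C →ₗ[R] K) := hom_isNoetherian
  haveI : IsArtinian R (C →ₗ[R] K) := hom_isArtinian
  set Γ : (C →ₗ[R] B) →ₗ[R] (C →ₗ[R] C) := LinearMap.llcomp R C B C g with hΓ
  set ι : (C →ₗ[R] K) →ₗ[R] (C →ₗ[R] B) := LinearMap.llcomp R C K B K.subtype with hι
  have hιinj : Function.Injective ι := by
    intro t t' h
    ext c
    exact LinearMap.congr_fun h c
  have hrange : LinearMap.range ι = LinearMap.ker Γ := by
    ext s
    constructor
    · rintro ⟨t, rfl⟩
      rw [LinearMap.mem_ker]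
      ext c
      exact (t c).2
    · intro hs
      refine ⟨LinearMap.codRestrict K s (fun c => ?_), ?_⟩
      · exact LinearMap.congr_fun (LinearMap.mem_ker.mp hs) c
      · ext c; rfl
  have hH1 : flen R (C →ₗ[R] B) = flen R (LinearMap.ker Γ) + flen R (LinearMap.range Γ) := by
    have := flen_additive (R := R) (LinearMap.ker Γ)
    rwa [flen_congr Γ.quotKerEquivRange] at this
  have hkerΓ : flen R (LinearMap.ker Γ) = flen R (C →ₗ[R] A) := by
    have e1 : (C →ₗ[R] K) ≃ₗ[R] LinearMap.ker Γ :=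
      (LinearEquiv.ofInjective ι hιinj).trans (LinearEquiv.ofEq _ _ hrange)
    have e2 : (C →ₗ[R] K) ≃ₗ[R] (C →ₗ[R] A) :=
      LinearEquiv.arrowCongr (LinearEquiv.refl R C) eK.symm
    rw [← flen_congr e1, flen_congr e2]
  have hH2 : flen R (C →ₗ[R] B) = flen R (C →ₗ[R] A) + flen R (C →ₗ[R] C) := by
    have e3 : (C →ₗ[R] B) ≃ₗ[R] ((C →ₗ[R] A) × (C →ₗ[R] C)) :=
      (LinearEquiv.arrowCongr (LinearEquiv.refl R C) e).trans (LinearMap.prodEquiv R).symm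
    rw [flen_congr e3, flen_prod]
  have hfull : flen R (LinearMap.range Γ) = flen R (C →ₗ[R] C) := by omega
  have htop : LinearMap.range Γ = ⊤ := eq_top_of_flen_eq _ hfull
  have hid : LinearMap.id ∈ LinearMap.range Γ := htop.symm ▸ Submodule.mem_top
  obtain ⟨s, hs⟩ := hid
  exact ⟨s, hs⟩

end Core
section ArtinianAux

variable {R : Type u} [CommRing R]

theorem isArtinian_sup_aux {M : Type v} [AddCommGroup M] [Module R M] (p q : Submodule R M)
    (hp : IsArtinian R p) (hq : IsArtinian R q) : IsArtinian R ↥(p ⊔ q) := by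
  set F := p.subtype.coprod q.subtype with hF
  haveI : IsArtinian R (↥p × ↥q) := inferInstance
  haveI : IsArtinian R ↥(LinearMap.range F) :=
    isArtinian_of_surjective _ F.rangeRestrict F.surjective_rangeRestrict
  exact isArtinian_of_injective (LinearEquiv.ofEq _ _ (Submodule.sup_eq_range p q)).toLinearMap
    (LinearEquiv.injective _)

theorem isArtinian_of_maximal_smul {M : Type v} [AddCommGroup M] [Module R M]
    [Module.Finite R M] (m : Ideal R) (hm : m.IsMaximal)
    (h : m • (⊤ : Submodule R M) = ⊥) : IsArtinian R M := by
  haveI : IsSimpleModule R (R ⧸ m) := isSimpleModule_iff_isCoatom.mpr hm.out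
  haveI : IsArtinian R (R ⧸ m) := inferInstance
  have hcyc : ∀ x : M, IsArtinian R ↥(Submodule.span R {x}) := by
    intro x
    set ℓ := LinearMap.toSpanSingleton R M x with hℓ
    have hker : m ≤ LinearMap.ker ℓ := by
      intro r hr
      have hmem : r • x ∈ m • (⊤ : Submodule R M) := Submodule.smul_mem_smul hr Submodule.mem_top
      rw [h] at hmem
      simpa [hℓ] using hmem
    set q : (R ⧸ m) →ₗ[R] M := Submodule.liftQ m ℓ hker with hq
    have hr : LinearMap.range q = Submodule.span R {x} := by
      rw [Submodule.range_liftQ]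
      exact (LinearMap.span_singleton_eq_range R M x).symm
    haveI : IsArtinian R ↥(LinearMap.range q) :=
      isArtinian_of_surjective _ q.rangeRestrict q.surjective_rangeRestrict
    exact isArtinian_of_injective (LinearEquiv.ofEq _ _ hr.symm).toLinearMap
      (LinearEquiv.injective _)
  have hfin : ∀ s : Finset M, IsArtinian R ↥(Submodule.span R (s : Set M)) := by
    classical
    intro s
    induction s using Finset.induction_on with
    | empty =>
      haveI : Subsingleton ↥(Submodule.span R ((∅ : Finset M) : Set M)) := by
        rw [Finset.coe_empty, Submodule.span_empty]
        infer_instance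
      infer_instance
    | @insert a s ha ih =>
      have hspan : Submodule.span R ((insert a s : Finset M) : Set M) =
          Submodule.span R {a} ⊔ Submodule.span R (s : Set M) := by
        rw [Finset.coe_insert, Submodule.span_insert]
      haveI := isArtinian_sup_aux (Submodule.span R {a}) (Submodule.span R (s : Set M))
        (hcyc a) ih
      exact isArtinian_of_injective (LinearEquiv.ofEq _ _ hspan).toLinearMap
        (LinearEquiv.injective _)
  obtain ⟨s, hs⟩ := Module.finite_def.mp ‹Module.Finite R M›
  haveI : IsArtinian R ↥(⊤ : Submodule R M) :=
    isArtinian_of_injective (LinearEquiv.ofEq _ _ hs.symm).toLinearMap (LinearEquiv.injective _)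
  exact isArtinian_of_injective Submodule.topEquiv.symm.toLinearMap (LinearEquiv.injective _)

theorem isArtinian_of_maximal_pow_smul [IsNoetherianRing R] (m : Ideal R) (hm : m.IsMaximal) :
    ∀ (n : ℕ) (M : Type v) [AddCommGroup M] [Module R M] [Module.Finite R M],
      m ^ n • (⊤ : Submodule R M) = ⊥ → IsArtinian R M := by
  intro n
  induction n with
  | zero =>
    intro M _ _ _ h
    rw [pow_zero, Ideal.one_eq_top, Submodule.top_smul] at h
    haveI : Subsingleton M := by
      refine subsingleton_of_forall_eq 0 (fun x => ?_)
      have : x ∈ (⊤ : Submodule R M) := Submodule.mem_top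
      rw [h] at this
      simpa using this
    infer_instance
  | succ n ih =>
    intro M _ _ _ h
    set S : Submodule R M := m • ⊤ with hSdef
    haveI : Module.Finite R ↥S := Module.finite_def.mpr (IsNoetherian.noetherian ⊤)
    have hS : m ^ n • (⊤ : Submodule R ↥S) = ⊥ := by
      have hmap : Submodule.map S.subtype (m ^ n • (⊤ : Submodule R ↥S)) = ⊥ := by
        rw [Submodule.map_smul'', Submodule.map_subtype_top]
        rw [hSdef, ← Submodule.smul_assoc, Ideal.smul_eq_mul, ← pow_succ]
        exact h
      have := Submodule.map_injective_of_injective S.injective_subtype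
        (hmap.trans (Submodule.map_bot S.subtype).symm)
      exact this
    have hQ : m • (⊤ : Submodule R (M ⧸ S)) = ⊥ := by
      have htop : Submodule.map S.mkQ (⊤ : Submodule R M) = ⊤ := by
        rw [Submodule.map_top, Submodule.range_mkQ]
      rw [← htop, ← Submodule.map_smul'']
      rw [eq_bot_iff]
      rintro y ⟨x, hx, rfl⟩
      have hxS : x ∈ S := by rw [hSdef]; exact hx
      simp only [Submodule.mkQ_apply, Submodule.mem_bot]
      exact (Submodule.Quotient.mk_eq_zero S).mpr hxS
    haveI := ih ↥S hS
    haveI := isArtinian_of_maximal_smul m hm hQ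
    exact isArtinian_of_range_eq_ker S.subtype S.mkQ
      (by rw [Submodule.range_subtype, Submodule.ker_mkQ])

end ArtinianAux
section ULiftKrull

theorem uliftFinite {R : Type u} [CommRing R] {M : Type w} [AddCommGroup M] [Module R M]
    [Module.Finite R M] : Module.Finite (ULift.{w} R) (ULift.{u} M) := by
  classical
  obtain ⟨s, hs⟩ := Module.finite_def.mp ‹Module.Finite R M›
  haveI : DecidableEq (ULift.{u} M) := Classical.decEq _
  refine Module.finite_def.mpr ⟨s.image ULift.up, ?_⟩
  rw [Finset.coe_image]
  have key : ∀ x : M, ULift.up.{u} x ∈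
      Submodule.span (ULift.{w} R) (ULift.up '' (s : Set M)) := by
    intro x
    have hx : x ∈ Submodule.span R (s : Set M) := by rw [hs]; exact Submodule.mem_top
    refine Submodule.span_induction (p := fun z _ => ULift.up.{u} z ∈
      Submodule.span (ULift.{w} R) (ULift.up '' (s : Set M))) ?_ ?_ ?_ ?_ hx
    · intro y hy; exact Submodule.subset_span ⟨y, hy, rfl⟩
    · exact Submodule.zero_mem _
    · intro a b _ _ ha hb; exact Submodule.add_mem _ ha hb
    · intro r a _ ha
      have hsm : ULift.up.{u} (r • a) = (ULift.up.{w} r) • ULift.up.{u} a := rfl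
      rw [hsm]; exact Submodule.smul_mem _ _ ha
  rw [eq_top_iff]
  rintro ⟨x⟩ -
  exact key x

/-- Universe-polymorphic consequence of the Krull intersection theorem. -/
theorem exists_one_sub_smul_eq_zero {R : Type u} [CommRing R] [IsNoetherianRing R]
    {M : Type w} [AddCommGroup M] [Module R M] [Module.Finite R M]
    (I : Ideal R) (x : M) (hx : x ∈ ⨅ i : ℕ, I ^ i • (⊤ : Submodule R M)) :
    ∃ r ∈ I, (1 - r) • x = 0 := by
  let eR : ULift.{w} R ≃+* R := ULift.ringEquiv
  haveI : IsNoetherianRing (ULift.{w} R) := isNoetherianRing_of_ringEquiv R eR.symm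
  haveI : Module.Finite (ULift.{w} R) (ULift.{u} M) := uliftFinite
  set I' : Ideal (ULift.{w} R) := Ideal.map eR.symm.toRingHom I with hI'
  have hx' : ULift.up.{u} x ∈
      ⨅ i : ℕ, I' ^ i • (⊤ : Submodule (ULift.{w} R) (ULift.{u} M)) := by
    refine Submodule.mem_iInf _ |>.mpr (fun i => ?_)
    have hxi : x ∈ I ^ i • (⊤ : Submodule R M) := (Submodule.mem_iInf _).mp hx i
    refine Submodule.smul_induction_on (p := fun z => ULift.up.{u} z ∈
        I' ^ i • (⊤ : Submodule (ULift.{w} R) (ULift.{u} M))) hxi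
      (fun r hr w _ => ?_) (fun a b ha hb => ?_)
    · have hr' : ULift.up.{w} r ∈ I' ^ i := by
        rw [hI', ← Ideal.map_pow]
        exact Ideal.mem_map_of_mem _ hr
      exact Submodule.smul_mem_smul hr' Submodule.mem_top
    · exact Submodule.add_mem _ ha hb
  obtain ⟨r', hr'⟩ := (Ideal.mem_iInf_smul_pow_eq_bot_iff I' (ULift.up.{u} x)).mp hx'
  refine ⟨(r' : ULift.{w} R).down, ?_, ?_⟩
  · have hle : I' ≤ Ideal.comap eR.toRingHom I := by
      refine Ideal.map_le_iff_le_comap.mpr (fun z hz => ?_)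
      show eR (eR.symm z) ∈ I
      simpa using hz
    exact hle r'.2
  · have hdown : ((r' : ULift.{w} R).down) • x = x := congrArg ULift.down hr'
    rw [sub_smul, one_smul, hdown, sub_self]

end ULiftKrull

section Reduction

variable {R : Type u} [CommRing R]

theorem prod_smul_top {M C : Type*} [AddCommGroup M] [Module R M] [AddCommGroup C] [Module R C]
    (I : Ideal R) :
    I • (⊤ : Submodule R (M × C)) =
      (I • (⊤ : Submodule R M)).prod (I • (⊤ : Submodule R C)) := by
  apply le_antisymm
  · refine Submodule.smul_le.mpr (fun r hr x _ => ?_)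
    refine Submodule.mem_prod.mpr ⟨?_, ?_⟩
    · exact Submodule.smul_mem_smul hr Submodule.mem_top
    · exact Submodule.smul_mem_smul hr Submodule.mem_top
  · rintro ⟨x, y⟩ ⟨hx, hy⟩
    have h1 : ((x, 0) : M × C) ∈ I • (⊤ : Submodule R (M × C)) := by
      have h := Submodule.mem_map_of_mem (f := LinearMap.inl R M C) hx
      rw [Submodule.map_smul''] at h
      exact Submodule.smul_mono le_rfl le_top h
    have h2 : ((0, y) : M × C) ∈ I • (⊤ : Submodule R (M × C)) := by
      have h := Submodule.mem_map_of_mem (f := LinearMap.inr R M C) hy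
      rw [Submodule.map_smul''] at h
      exact Submodule.smul_mono le_rfl le_top h
    have := Submodule.add_mem _ h1 h2
    simpa using this

theorem smul_top_le_comap {M N : Type*} [AddCommGroup M] [Module R M] [AddCommGroup N]
    [Module R N] (I : Ideal R) (f : M →ₗ[R] N) :
    (I • ⊤ : Submodule R M) ≤ Submodule.comap f (I • ⊤ : Submodule R N) := by
  intro x hx
  have h := Submodule.mem_map_of_mem (f := f) hx
  rw [Submodule.map_smul''] at h
  exact Submodule.smul_mono le_rfl le_top h

theorem smul_top_quotient_eq_bot {M : Type*} [AddCommGroup M] [Module R M] (I : Ideal R) :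
    I • (⊤ : Submodule R (M ⧸ (I • ⊤ : Submodule R M))) = ⊥ := by
  have htop : Submodule.map (I • ⊤ : Submodule R M).mkQ (⊤ : Submodule R M) = ⊤ := by
    rw [Submodule.map_top, Submodule.range_mkQ]
  rw [← htop, ← Submodule.map_smul'']
  rw [eq_bot_iff]
  rintro y ⟨x, hx, rfl⟩
  simp only [Submodule.mkQ_apply, Submodule.mem_bot]
  exact (Submodule.Quotient.mk_eq_zero _).mpr hx

theorem pi_smul_top_mem {ι : Type*} [Fintype ι] [DecidableEq ι] {X : Type*} [AddCommGroup X]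
    [Module R X] (I : Ideal R) (z : ι → X) (hz : ∀ i, z i ∈ I • (⊤ : Submodule R X)) :
    z ∈ I • (⊤ : Submodule R (ι → X)) := by
  have hzeq : z = ∑ i : ι, Pi.single i (z i) := by
    rw [Finset.univ_sum_single]
  rw [hzeq]
  refine Submodule.sum_mem _ (fun i _ => ?_)
  have h := Submodule.mem_map_of_mem (f := LinearMap.single R (fun _ : ι => X) i) (hz i)
  rw [Submodule.map_smul''] at h
  exact Submodule.smul_mono le_rfl le_top h

theorem hom_smul_top_mem {ι : Type*} [Fintype ι] [DecidableEq ι] {X : Type v} [AddCommGroup X]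
    [Module R X] (I : Ideal R) (φ : (ι → R) →ₗ[R] X)
    (hφ : ∀ i, φ (Pi.single i 1) ∈ I • (⊤ : Submodule R X)) :
    φ ∈ I • (⊤ : Submodule R ((ι → R) →ₗ[R] X)) := by
  set E := LinearEquiv.piRing R X ι R with hE
  have hmem : E φ ∈ I • (⊤ : Submodule R (ι → X)) := by
    refine pi_smul_top_mem I _ (fun i => ?_)
    have : E φ i = φ (Pi.single i 1) := by
      rw [hE, LinearEquiv.piRing_apply]
    rw [this]
    exact hφ i
  have himg : I • (⊤ : Submodule R ((ι → R) →ₗ[R] X)) =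
      Submodule.map (E.symm : (ι → X) →ₗ[R] ((ι → R) →ₗ[R] X)) (I • ⊤) := by
    rw [Submodule.map_smul'', Submodule.map_top]
    have : LinearMap.range (E.symm : (ι → X) →ₗ[R] ((ι → R) →ₗ[R] X)) = ⊤ :=
      LinearMap.range_eq_top.mpr E.symm.surjective
    rw [this]
  rw [himg]
  exact ⟨E φ, hmem, E.symm_apply_apply φ⟩

theorem mem_of_forall_maximal_pow [IsNoetherianRing R] {G : Type*} [AddCommGroup G] [Module R G]
    [Module.Finite R G] (V : Submodule R G) (y : G)
    (hy : ∀ (m : Ideal R), m.IsMaximal → ∀ n : ℕ, y ∈ V ⊔ (m ^ n • (⊤ : Submodule R G))) :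
    y ∈ V := by
  set Q := G ⧸ V with hQ
  set yb : Q := V.mkQ y with hyb
  have hker : ∀ (m : Ideal R), m.IsMaximal → ∃ r : R, r ∈ m ∧ (1 - r) • yb = 0 := by
    intro m hm
    have hmem : yb ∈ ⨅ i : ℕ, m ^ i • (⊤ : Submodule R Q) := by
      refine Submodule.mem_iInf _ |>.mpr (fun n => ?_)
      have h := Submodule.mem_map_of_mem (f := V.mkQ) (hy m hm n)
      rw [Submodule.map_sup] at h
      have hV : Submodule.map V.mkQ V = ⊥ := by
        rw [eq_bot_iff]
        rintro z ⟨x, hx, rfl⟩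
        simp only [Submodule.mkQ_apply, Submodule.mem_bot]
        exact (Submodule.Quotient.mk_eq_zero _).mpr hx
      rw [hV, bot_sup_eq, Submodule.map_smul''] at h
      exact Submodule.smul_mono le_rfl le_top h
    exact exists_one_sub_smul_eq_zero m yb hmem
  set J : Ideal R := LinearMap.ker (LinearMap.toSpanSingleton R Q yb) with hJ
  have hJtop : J = ⊤ := by
    by_contra hne
    obtain ⟨m, hm, hle⟩ := Ideal.exists_le_maximal J hne
    obtain ⟨r, hrm, hryb⟩ := hker m hm
    have h1r : (1 - r) ∈ J := hryb
    have : (1 : R) ∈ m := by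
      have := hle h1r
      have h1 : (1 : R) = (1 - r) + r := by ring
      rw [h1]
      exact m.add_mem this hrm
    exact hm.ne_top (Ideal.eq_top_of_isUnit_mem m this isUnit_one)
  have hy0 : yb = 0 := by
    have h1 : (1 : R) ∈ J := hJtop ▸ Submodule.mem_top
    have h2 := LinearMap.mem_ker.mp h1
    rw [LinearMap.toSpanSingleton_apply, one_smul] at h2
    exact h2
  rw [hyb] at hy0
  exact (Submodule.Quotient.mk_eq_zero _).mp hy0

end Reduction
/-- Miyata's theorem (generalized): an exact sequence `M → N → C → 0` of finitely generated
modules over a Noetherian ring with `N ≅ M × C` is split exact: the first map is injective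
and the second admits a linear section. -/
theorem splitExact_of_equiv_prod
    (R : Type u) [CommRing R] [IsNoetherianRing R]
    (M N C : Type v) [AddCommGroup M] [AddCommGroup N] [AddCommGroup C]
    [Module R M] [Module R N] [Module R C]
    [Module.Finite R M] [Module.Finite R N] [Module.Finite R C]
    (f : M →ₗ[R] N) (g : N →ₗ[R] C)
    (hg : Function.Surjective g) (hexact : LinearMap.range f = LinearMap.ker g)
    (hiso : Nonempty (N ≃ₗ[R] (M × C))) :
    Function.Injective f ∧ ∃ s : C →ₗ[R] N, g ∘ₗ s = LinearMap.id := by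
  classical
  obtain ⟨e⟩ := hiso
  -- a free presentation of C
  obtain ⟨d, vC, hvC⟩ := Module.Finite.exists_fin (R := R) (M := C)
  set π : (Fin d → R) →ₗ[R] C := Fintype.linearCombination R vC with hπdef
  have hπ : Function.Surjective π := by
    rw [← LinearMap.range_eq_top, hπdef, Fintype.range_linearCombination, hvC]
  have hWfg : (LinearMap.ker π).FG := IsNoetherian.noetherian _
  obtain ⟨d', vW, hvW⟩ := Submodule.fg_iff_exists_fin_generating_family.mp hWfg
  set w : (Fin d' → R) →ₗ[R] (Fin d → R) := Fintype.linearCombination R vW with hwdef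
  have hw : LinearMap.range w = LinearMap.ker π := by
    rw [hwdef, Fintype.range_linearCombination, hvW]
  -- the constraint map
  set Γ : ((Fin d → R) →ₗ[R] N) →ₗ[R]
      (((Fin d → R) →ₗ[R] C) × ((Fin d' → R) →ₗ[R] N)) :=
    (LinearMap.llcomp R (Fin d → R) N C g).prod (LinearMap.lcomp R N w) with hΓdef
  have hΓapp : ∀ ℓ, Γ ℓ = (g ∘ₗ ℓ, ℓ ∘ₗ w) := fun ℓ => rfl
  haveI : Module.Finite R ((Fin d → R) →ₗ[R] C) :=
    Module.Finite.equiv (LinearEquiv.piRing R C (Fin d) R).symm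
  haveI : Module.Finite R ((Fin d' → R) →ₗ[R] N) :=
    Module.Finite.equiv (LinearEquiv.piRing R N (Fin d') R).symm
  -- the key membership, proved via reduction mod powers of maximal ideals
  have hkey : ((π, 0) : ((Fin d → R) →ₗ[R] C) × ((Fin d' → R) →ₗ[R] N)) ∈
      LinearMap.range Γ := by
    refine mem_of_forall_maximal_pow _ _ (fun m hm n => ?_)
    set I : Ideal R := m ^ n with hIdef
    -- induced maps on the quotients mod I
    set fb : (M ⧸ (I • ⊤ : Submodule R M)) →ₗ[R] (N ⧸ (I • ⊤ : Submodule R N)) :=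
      Submodule.mapQ _ _ f (smul_top_le_comap I f) with hfbdef
    set gb : (N ⧸ (I • ⊤ : Submodule R N)) →ₗ[R] (C ⧸ (I • ⊤ : Submodule R C)) :=
      Submodule.mapQ _ _ g (smul_top_le_comap I g) with hgbdef
    have hfbmk : ∀ x : M, fb ((I • ⊤ : Submodule R M).mkQ x)
        = (I • ⊤ : Submodule R N).mkQ (f x) := by
      intro x; rw [hfbdef]; simp [Submodule.mapQ_apply]
    have hgbmk : ∀ x : N, gb ((I • ⊤ : Submodule R N).mkQ x)
        = (I • ⊤ : Submodule R C).mkQ (g x) := by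
      intro x; rw [hgbdef]; simp [Submodule.mapQ_apply]
    have hgbsurj : Function.Surjective gb := by
      intro cb
      obtain ⟨c, rfl⟩ := (I • ⊤ : Submodule R C).mkQ_surjective cb
      obtain ⟨b, rfl⟩ := hg c
      exact ⟨(I • ⊤ : Submodule R N).mkQ b, hgbmk b⟩
    -- exactness of the induced sequence
    have hmapbot : Submodule.map (I • ⊤ : Submodule R N).mkQ (I • ⊤ : Submodule R N) = ⊥ := by
      rw [eq_bot_iff]
      rintro y ⟨x, hx, rfl⟩
      simp only [Submodule.mkQ_apply, Submodule.mem_bot]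
      exact (Submodule.Quotient.mk_eq_zero _).mpr hx
    have hcomap : Submodule.comap g (I • ⊤ : Submodule R C) = LinearMap.ker g ⊔
        (I • ⊤ : Submodule R N) := by
      apply le_antisymm
      · intro x hx
        have hmapN : Submodule.map g (I • ⊤ : Submodule R N) = (I • ⊤ : Submodule R C) := by
          rw [Submodule.map_smul'', Submodule.map_top, LinearMap.range_eq_top.mpr hg]
        have hx' : g x ∈ Submodule.map g (I • ⊤ : Submodule R N) := by rw [hmapN]; exact hx
        obtain ⟨u, hu, hgu⟩ := hx'
        have hxu : x - u ∈ LinearMap.ker g := by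
          rw [LinearMap.mem_ker, map_sub, hgu, sub_self]
        have hxdec : x = (x - u) + u := by abel
        rw [hxdec]
        exact Submodule.add_mem _ (Submodule.mem_sup_left hxu) (Submodule.mem_sup_right hu)
      · refine sup_le ?_ (smul_top_le_comap I g)
        intro x hx
        have hx0 : g x = 0 := hx
        show g x ∈ (I • ⊤ : Submodule R C)
        rw [hx0]
        exact Submodule.zero_mem _
    have hexb : LinearMap.range fb = LinearMap.ker gb := by
      have h1 : LinearMap.ker gb =
          Submodule.map (I • ⊤ : Submodule R N).mkQ (Submodule.comap g (I • ⊤ : Submodule R C)) := by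
        apply le_antisymm
        · intro y hy
          obtain ⟨x, rfl⟩ := (I • ⊤ : Submodule R N).mkQ_surjective y
          have : gb ((I • ⊤ : Submodule R N).mkQ x) = 0 := hy
          rw [hgbmk] at this
          have hx : g x ∈ (I • ⊤ : Submodule R C) := by
            have := (Submodule.Quotient.mk_eq_zero _).mp (by simpa using this)
            exact this
          exact Submodule.mem_map_of_mem hx
        · rintro y ⟨x, hx, rfl⟩
          show gb ((I • ⊤ : Submodule R N).mkQ x) = 0
          rw [hgbmk]
          simpa using (Submodule.Quotient.mk_eq_zero _).mpr hx
      have h2 : LinearMap.range fb =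
          Submodule.map (I • ⊤ : Submodule R N).mkQ (LinearMap.range f) := by
        apply le_antisymm
        · rintro y ⟨xb, rfl⟩
          obtain ⟨x, rfl⟩ := (I • ⊤ : Submodule R M).mkQ_surjective xb
          rw [hfbmk]
          exact Submodule.mem_map_of_mem (LinearMap.mem_range_self f x)
        · rintro y ⟨z, ⟨x, rfl⟩, rfl⟩
          exact ⟨(I • ⊤ : Submodule R M).mkQ x, hfbmk x⟩
      rw [h1, h2, hcomap, Submodule.map_sup, hmapbot, sup_bot_eq, hexact]
    -- the equivalence on quotients
    have hmapE : Submodule.map (e : N →ₗ[R] M × C) (I • ⊤ : Submodule R N)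
        = (I • ⊤ : Submodule R (M × C)) := by
      rw [Submodule.map_smul'', Submodule.map_top]
      have : LinearMap.range (e : N →ₗ[R] M × C) = ⊤ := LinearMap.range_eq_top.mpr e.surjective
      rw [this]
    set F : (M × C) →ₗ[R] ((M ⧸ (I • ⊤ : Submodule R M)) × (C ⧸ (I • ⊤ : Submodule R C))) :=
      (I • ⊤ : Submodule R M).mkQ.prodMap (I • ⊤ : Submodule R C).mkQ with hFdef
    have hFsurj : Function.Surjective F := by
      rintro ⟨a, b⟩
      obtain ⟨x, rfl⟩ := (I • ⊤ : Submodule R M).mkQ_surjective a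
      obtain ⟨y, rfl⟩ := (I • ⊤ : Submodule R C).mkQ_surjective b
      exact ⟨(x, y), rfl⟩
    have hFker : LinearMap.ker F = (I • ⊤ : Submodule R (M × C)) := by
      rw [hFdef, LinearMap.ker_prodMap, Submodule.ker_mkQ, Submodule.ker_mkQ]
      exact (prod_smul_top I).symm
    set eb : (N ⧸ (I • ⊤ : Submodule R N)) ≃ₗ[R]
        ((M ⧸ (I • ⊤ : Submodule R M)) × (C ⧸ (I • ⊤ : Submodule R C))) :=
      (Submodule.Quotient.equiv _ _ e hmapE).trans
        ((Submodule.quotEquivOfEq _ _ hFker.symm).trans (F.quotKerEquivOfSurjective hFsurj))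
    -- instances for the finite-length core lemma
    haveI : IsArtinian R (M ⧸ (I • ⊤ : Submodule R M)) :=
      isArtinian_of_maximal_pow_smul m hm n _ (by rw [← hIdef]; exact smul_top_quotient_eq_bot I)
    haveI : IsArtinian R (N ⧸ (I • ⊤ : Submodule R N)) :=
      isArtinian_of_maximal_pow_smul m hm n _ (by rw [← hIdef]; exact smul_top_quotient_eq_bot I)
    haveI : IsArtinian R (C ⧸ (I • ⊤ : Submodule R C)) :=
      isArtinian_of_maximal_pow_smul m hm n _ (by rw [← hIdef]; exact smul_top_quotient_eq_bot I)
    obtain ⟨sb, hsb⟩ := exists_section_of_finiteLength fb gb hgbsurj hexb eb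
    -- lift through the free module
    obtain ⟨ℓ, hℓ⟩ := Module.projective_lifting_property (I • ⊤ : Submodule R N).mkQ
      (sb ∘ₗ (I • ⊤ : Submodule R C).mkQ ∘ₗ π) ((I • ⊤ : Submodule R N).mkQ_surjective)
    have hℓx : ∀ x, (I • ⊤ : Submodule R N).mkQ (ℓ x) = sb ((I • ⊤ : Submodule R C).mkQ (π x)) :=
      fun x => LinearMap.congr_fun hℓ x
    have hgoal1 : ∀ x, g (ℓ x) - π x ∈ (I • ⊤ : Submodule R C) := by
      intro x
      have h3 : gb (sb ((I • ⊤ : Submodule R C).mkQ (π x))) = (I • ⊤ : Submodule R C).mkQ (π x) := by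
        have := LinearMap.congr_fun hsb ((I • ⊤ : Submodule R C).mkQ (π x))
        simpa using this
      have h2 : (I • ⊤ : Submodule R C).mkQ (g (ℓ x)) = (I • ⊤ : Submodule R C).mkQ (π x) := by
        rw [← hgbmk, hℓx, h3]
      have h4 : (I • ⊤ : Submodule R C).mkQ (g (ℓ x) - π x) = 0 := by
        rw [map_sub, h2, sub_self]
      exact (Submodule.Quotient.mk_eq_zero _).mp (by simpa using h4)
    have hgoal2 : ∀ u, ℓ (w u) ∈ (I • ⊤ : Submodule R N) := by
      intro u
      have hwu : π (w u) = 0 := by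
        have hmem : w u ∈ LinearMap.ker π := by
          rw [← hw]; exact LinearMap.mem_range_self w u
        exact hmem
      have h1 := hℓx (w u)
      rw [hwu] at h1
      simp only [map_zero] at h1
      exact (Submodule.Quotient.mk_eq_zero _).mp (by simpa using h1)
    -- assemble the membership
    refine Submodule.mem_sup.mpr ⟨Γ ℓ, LinearMap.mem_range_self Γ ℓ, (π, 0) - Γ ℓ, ?_, by abel⟩
    rw [prod_smul_top]
    refine Submodule.mem_prod.mpr ⟨?_, ?_⟩
    · have hfst : ((π, 0) - Γ ℓ).1 = π - g ∘ₗ ℓ := by rw [hΓapp]; rfl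
      rw [hfst]
      refine hom_smul_top_mem I _ (fun i => ?_)
      have happ : (π - g ∘ₗ ℓ) (Pi.single i 1) = -(g (ℓ (Pi.single i 1)) - π (Pi.single i 1)) := by
        simp [LinearMap.sub_apply]
      rw [happ]
      exact Submodule.neg_mem _ (hgoal1 _)
    · have hsnd : ((π, 0) - Γ ℓ).2 = -(ℓ ∘ₗ w) := by rw [hΓapp]; simp
      rw [hsnd]
      refine hom_smul_top_mem I _ (fun i => ?_)
      have happ : (-(ℓ ∘ₗ w)) (Pi.single i 1) = -(ℓ (w (Pi.single i 1))) := rfl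
      rw [happ]
      exact Submodule.neg_mem _ (hgoal2 _)
  -- extract the section from the membership
  obtain ⟨ℓ, hΓℓ⟩ := hkey
  rw [hΓapp] at hΓℓ
  have hc1 : g ∘ₗ ℓ = π := congrArg Prod.fst hΓℓ
  have hc2 : ℓ ∘ₗ w = 0 := congrArg Prod.snd hΓℓ
  have hkerle : LinearMap.ker π ≤ LinearMap.ker ℓ := by
    rw [← hw]
    rintro x ⟨u, rfl⟩
    show ℓ (w u) = 0
    exact LinearMap.congr_fun hc2 u
  set eπ := π.quotKerEquivOfSurjective hπ with heπ
  set s : C →ₗ[R] N :=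
    (Submodule.liftQ (LinearMap.ker π) ℓ hkerle) ∘ₗ (eπ.symm : C →ₗ[R] _) with hsdef
  have hgs : g ∘ₗ s = LinearMap.id := by
    ext c
    obtain ⟨x, rfl⟩ := hπ c
    have h1 : eπ.symm (π x) = Submodule.Quotient.mk x := by
      apply eπ.injective
      rw [LinearEquiv.apply_symm_apply]
      rfl
    show g (s (π x)) = π x
    rw [hsdef]
    simp only [LinearMap.coe_comp, Function.comp_apply, LinearEquiv.coe_coe]
    rw [h1, Submodule.liftQ_apply]
    exact LinearMap.congr_fun hc1 x
  -- injectivity of f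
  set E : (M × C) →ₗ[R] N := f.coprod s with hEdef
  have hEsurj : Function.Surjective E := by
    intro nn
    have hker : nn - s (g nn) ∈ LinearMap.ker g := by
      rw [LinearMap.mem_ker, map_sub]
      have : g (s (g nn)) = g nn := LinearMap.congr_fun hgs (g nn)
      rw [this, sub_self]
    rw [← hexact] at hker
    obtain ⟨mm, hmm⟩ := hker
    refine ⟨(mm, g nn), ?_⟩
    rw [hEdef]
    simp only [LinearMap.coprod_apply]
    rw [hmm]
    abel
  have hcompsurj : Function.Surjective ((e : N →ₗ[R] M × C) ∘ₗ E) := by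
    rw [LinearMap.coe_comp]
    exact e.surjective.comp hEsurj
  have hcompinj : Function.Injective ((e : N →ₗ[R] M × C) ∘ₗ E) :=
    OrzechProperty.injective_of_surjective_endomorphism _ hcompsurj
  have hEinj : Function.Injective E := by
    intro a b hab
    apply hcompinj
    simp only [LinearMap.coe_comp, Function.comp_apply, hab]
  constructor
  · intro a b hab
    have h1 : E (a, 0) = E (b, 0) := by
      rw [hEdef]
      simp only [LinearMap.coprod_apply, map_zero, add_zero]
      exact hab
    exact (Prod.ext_iff.mp (hEinj h1)).1
  · exact ⟨s, hgs⟩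
end
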